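/- In a graded connected unital shuffle algebra, for any element x of positive degree, the left half-shuffle exponential X := exp^≺(x) = 1 + Σ_{n>0} x^{≺n} and the right half-shuffle exponential Y := exp^≻(−x) = 1 + Σ_{n>0} (−x)^{≻n} satisfy Y ⧢ X = X ⧢ Y = 1; in particular Y is the shuffle-inverse of X. -/

import Mathlib

/-- A shuffle (dendriform) algebra over a field `k`: a `k`-vector space `D` with two
bilinear half-shuffle products `≺` (`prec`) and `≻` (`succ`) satisfying
`(a ≺ b) ≺ c = a ≺ (b ⧢ c)`, `(a ≻ b) ≺ c = a ≻ (b ≺ c)`, `a ≻ (b ≻ c) = (a ⧢ b) ≻ c`,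
where `a ⧢ b := a ≺ b + a ≻ b`. -/
class ShuffleAlgebra (k : Type*) (D : Type*) [Field k] [AddCommGroup D] [Module k D] where
  prec : D →ₗ[k] D →ₗ[k] D
  succ : D →ₗ[k] D →ₗ[k] D
  prec_prec : ∀ a b c : D, prec (prec a b) c = prec a (prec b c + succ b c)
  succ_prec : ∀ a b c : D, prec (succ a b) c = succ a (prec b c)
  succ_succ : ∀ a b c : D, succ a (succ b c) = succ (prec a b + succ a b) c

variable (k : Type*) {D : Type*} [Field k] [AddCommGroup D] [Module k D] [ShuffleAlgebra k D]

/-- The left half-shuffle product `a ≺ b`. -/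
def hsPrec (a b : D) : D := ShuffleAlgebra.prec (k := k) a b

/-- The right half-shuffle product `a ≻ b`. -/
def hsSucc (a b : D) : D := ShuffleAlgebra.succ (k := k) a b

/-- The shuffle product `a ⧢ b := a ≺ b + a ≻ b`. -/
def hsShuffle (a b : D) : D := hsPrec k a b + hsSucc k a b

/-!
Formal-series model of a graded connected unital shuffle algebra (cf. the paper, which
works "with formal series expansions ... insuring convergence in the formal sense"):
the positive-degree part is the space `ℕ → D` of formal series
`x = Σ_{n ≥ 0} xₙ t^{n+1}` with coefficients in a shuffle algebra `D` (the coefficient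
`x n` sits in degree `n + 1`, so there is no degree-zero component), and the unital
augmentation is `k × (ℕ → D) = k·1 ⊕ (ℕ → D)`, with the unit conventions
`a ≺ 1 = a = 1 ≻ a`, `1 ≺ a = 0 = a ≻ 1`, `1 ⧢ 1 = 1`.
All infinite sums are finite in each degree.
-/

/-- `≺` on positive-degree formal series. -/
def cprec (x y : ℕ → D) : ℕ → D := fun n =>
  match n with
  | 0 => 0
  | n + 1 => ∑ p ∈ Finset.HasAntidiagonal.antidiagonal n, hsPrec k (x p.1) (y p.2)

/-- `≻` on positive-degree formal series. -/
def csucc (x y : ℕ → D) : ℕ → D := fun n =>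
  match n with
  | 0 => 0
  | n + 1 => ∑ p ∈ Finset.HasAntidiagonal.antidiagonal n, hsSucc k (x p.1) (y p.2)

/-- `⧢` on positive-degree formal series. -/
def csh (x y : ℕ → D) : ℕ → D := cprec k x y + csucc k x y

/-- The unit `1` of the unital augmentation `k·1 ⊕ (ℕ → D)`. -/
def uone : k × (ℕ → D) := (1, 0)

/-- The inclusion of the positive-degree part into the unital augmentation. -/
def uinj (a : ℕ → D) : k × (ℕ → D) := (0, a)

/-- The shuffle product `⧢` on the unital augmentation (using `1 ⧢ X = X = X ⧢ 1`). -/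
def ush (X Y : k × (ℕ → D)) : k × (ℕ → D) :=
  (X.1 * Y.1, X.1 • Y.2 + Y.1 • X.2 + csh k X.2 Y.2)

/-- `a ≺ X` for `a` of positive degree and `X` in the unital augmentation
(using `a ≺ 1 = a`). -/
def uprec (a : ℕ → D) (X : k × (ℕ → D)) : ℕ → D := X.1 • a + cprec k a X.2

/-- `X ≻ a` for `a` of positive degree and `X` in the unital augmentation
(using `1 ≻ a = a`). -/
def usucc (X : k × (ℕ → D)) (a : ℕ → D) : ℕ → D := X.1 • a + csucc k X.2 a

/-- `a^{≺(m+1)}`, i.e. `precPow k a m = a^{≺(m+1)}` (and `a^{≺0} = 1`). -/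
def precPow (a : ℕ → D) : ℕ → (ℕ → D)
  | 0 => a
  | m + 1 => cprec k a (precPow a m)

/-- `a^{≻(m+1)}`. -/
def succPow (a : ℕ → D) : ℕ → (ℕ → D)
  | 0 => a
  | m + 1 => csucc k (succPow a m) a

/-- `a^{⧢(m+1)}`. -/
def shPow (a : ℕ → D) : ℕ → (ℕ → D)
  | 0 => a
  | m + 1 => csh k a (shPow a m)

/-- The left half-shuffle exponential `exp^≺(a) = 1 + Σ_{n>0} a^{≺n}`
(the sum is finite in each degree). -/
def expPrec (a : ℕ → D) : k × (ℕ → D) :=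
  (1, fun n => ∑ m ∈ Finset.range (n + 1), precPow k a m n)

/-- The right half-shuffle exponential `exp^≻(a) = 1 + Σ_{n>0} a^{≻n}`. -/
def expSucc (a : ℕ → D) : k × (ℕ → D) :=
  (1, fun n => ∑ m ∈ Finset.range (n + 1), succPow k a m n)

/-- The shuffle exponential `exp^⧢(a) = 1 + Σ_{n>0} a^{⧢n}/n!`. -/
noncomputable def expSh (a : ℕ → D) : k × (ℕ → D) :=
  (1, fun n => ∑ m ∈ Finset.range (n + 1), (((m + 1).factorial : k))⁻¹ • shPow k a m n)


section Aux

open Finset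

lemma hsPrec_zero_right (a : D) : hsPrec k a 0 = 0 := by simp [hsPrec]
lemma hsSucc_zero_left (a : D) : hsSucc k 0 a = 0 := by simp [hsSucc]
lemma hsPrec_zero_left (a : D) : hsPrec k 0 a = 0 := by simp [hsPrec]
lemma hsSucc_zero_right (a : D) : hsSucc k a 0 = 0 := by simp [hsSucc]

lemma cprec_zero_apply (x y : ℕ → D) : cprec k x y 0 = 0 := rfl
lemma csucc_zero_apply (x y : ℕ → D) : csucc k x y 0 = 0 := rfl

lemma cprec_succ_apply (x y : ℕ → D) (n : ℕ) :
    cprec k x y (n + 1) = ∑ p ∈ Finset.HasAntidiagonal.antidiagonal n, hsPrec k (x p.1) (y p.2) := rfl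

lemma csucc_succ_apply (x y : ℕ → D) (n : ℕ) :
    csucc k x y (n + 1) = ∑ p ∈ Finset.HasAntidiagonal.antidiagonal n, hsSucc k (x p.1) (y p.2) := rfl

lemma cprec_add_left (x y z : ℕ → D) :
    cprec k (x + y) z = cprec k x z + cprec k y z := by
  funext n
  cases n with
  | zero => show (0 : D) = 0 + 0; rw [add_zero]
  | succ n =>
    show ∑ p ∈ Finset.HasAntidiagonal.antidiagonal n, hsPrec k ((x + y) p.1) (z p.2) = _
    rw [show ((cprec k x z + cprec k y z) (n + 1)) = cprec k x z (n+1) + cprec k y z (n+1) from rfl,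
      cprec_succ_apply, cprec_succ_apply, ← Finset.sum_add_distrib]
    refine Finset.sum_congr rfl fun p _ => ?_
    show ShuffleAlgebra.prec (k := k) (x p.1 + y p.1) (z p.2) = _
    rw [map_add, LinearMap.add_apply]; rfl

lemma cprec_add_right (x y z : ℕ → D) :
    cprec k x (y + z) = cprec k x y + cprec k x z := by
  funext n
  cases n with
  | zero => show (0 : D) = 0 + 0; rw [add_zero]
  | succ n =>
    show ∑ p ∈ Finset.HasAntidiagonal.antidiagonal n, hsPrec k (x p.1) ((y + z) p.2) = _
    rw [show ((cprec k x y + cprec k x z) (n + 1)) = cprec k x y (n+1) + cprec k x z (n+1) from rfl,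
      cprec_succ_apply, cprec_succ_apply, ← Finset.sum_add_distrib]
    refine Finset.sum_congr rfl fun p _ => ?_
    show ShuffleAlgebra.prec (k := k) (x p.1) (y p.2 + z p.2) = _
    rw [map_add]; rfl

lemma cprec_neg_left (x z : ℕ → D) : cprec k (-x) z = -(cprec k x z) := by
  funext n
  cases n with
  | zero => show (0 : D) = -0; rw [neg_zero]
  | succ n =>
    show ∑ p ∈ Finset.HasAntidiagonal.antidiagonal n, hsPrec k ((-x) p.1) (z p.2)
        = -(∑ p ∈ Finset.HasAntidiagonal.antidiagonal n, hsPrec k (x p.1) (z p.2))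
    rw [← Finset.sum_neg_distrib]
    refine Finset.sum_congr rfl fun p _ => ?_
    show ShuffleAlgebra.prec (k := k) (-(x p.1)) (z p.2) = _
    rw [map_neg, LinearMap.neg_apply]; rfl

lemma csucc_add_left (x y z : ℕ → D) :
    csucc k (x + y) z = csucc k x z + csucc k y z := by
  funext n
  cases n with
  | zero => show (0 : D) = 0 + 0; rw [add_zero]
  | succ n =>
    show ∑ p ∈ Finset.HasAntidiagonal.antidiagonal n, hsSucc k ((x + y) p.1) (z p.2) = _
    rw [show ((csucc k x z + csucc k y z) (n + 1)) = csucc k x z (n+1) + csucc k y z (n+1) from rfl,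
      csucc_succ_apply, csucc_succ_apply, ← Finset.sum_add_distrib]
    refine Finset.sum_congr rfl fun p _ => ?_
    show ShuffleAlgebra.succ (k := k) (x p.1 + y p.1) (z p.2) = _
    rw [map_add, LinearMap.add_apply]; rfl

lemma csucc_add_right (x y z : ℕ → D) :
    csucc k x (y + z) = csucc k x y + csucc k x z := by
  funext n
  cases n with
  | zero => show (0 : D) = 0 + 0; rw [add_zero]
  | succ n =>
    show ∑ p ∈ Finset.HasAntidiagonal.antidiagonal n, hsSucc k (x p.1) ((y + z) p.2) = _
    rw [show ((csucc k x y + csucc k x z) (n + 1)) = csucc k x y (n+1) + csucc k x z (n+1) from rfl,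
      csucc_succ_apply, csucc_succ_apply, ← Finset.sum_add_distrib]
    refine Finset.sum_congr rfl fun p _ => ?_
    show ShuffleAlgebra.succ (k := k) (x p.1) (y p.2 + z p.2) = _
    rw [map_add]; rfl

lemma csucc_neg_right (x z : ℕ → D) : csucc k x (-z) = -(csucc k x z) := by
  funext n
  cases n with
  | zero => show (0 : D) = -0; rw [neg_zero]
  | succ n =>
    show ∑ p ∈ Finset.HasAntidiagonal.antidiagonal n, hsSucc k (x p.1) ((-z) p.2)
        = -(∑ p ∈ Finset.HasAntidiagonal.antidiagonal n, hsSucc k (x p.1) (z p.2))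
    rw [← Finset.sum_neg_distrib]
    refine Finset.sum_congr rfl fun p _ => ?_
    show ShuffleAlgebra.succ (k := k) (x p.1) (-(z p.2)) = _
    rw [map_neg]; rfl

lemma cprec_sub_left (x y z : ℕ → D) :
    cprec k (x - y) z = cprec k x z - cprec k y z := by
  rw [sub_eq_add_neg, cprec_add_left, cprec_neg_left, sub_eq_add_neg]

lemma csucc_sub_right (x y z : ℕ → D) :
    csucc k x (y - z) = csucc k x y - csucc k x z := by
  rw [sub_eq_add_neg, csucc_add_right, csucc_neg_right, sub_eq_add_neg]

/-- Triple antidiagonal sum reassociation. -/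
lemma antidiag_assoc {M : Type*} [AddCommMonoid M] (n : ℕ) (f : ℕ → ℕ → ℕ → M) :
    ∑ p ∈ Finset.HasAntidiagonal.antidiagonal n, ∑ q ∈ Finset.HasAntidiagonal.antidiagonal p.1, f q.1 q.2 p.2 =
    ∑ p ∈ Finset.HasAntidiagonal.antidiagonal n, ∑ q ∈ Finset.HasAntidiagonal.antidiagonal p.2, f p.1 q.1 q.2 := by
  rw [Finset.sum_sigma', Finset.sum_sigma']
  refine Finset.sum_nbij' (fun r => ⟨(r.2.1, r.2.2 + r.1.2), (r.2.2, r.1.2)⟩)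
    (fun r => ⟨(r.1.1 + r.2.1, r.2.2), (r.1.1, r.2.1)⟩) ?_ ?_ ?_ ?_ ?_
  · rintro ⟨⟨p1, p2⟩, ⟨q1, q2⟩⟩ h
    simp only [Finset.mem_sigma, Finset.HasAntidiagonal.mem_antidiagonal, and_true, true_and] at h ⊢
    omega
  · rintro ⟨⟨p1, p2⟩, ⟨q1, q2⟩⟩ h
    simp only [Finset.mem_sigma, Finset.HasAntidiagonal.mem_antidiagonal, and_true, true_and] at h ⊢
    omega
  · rintro ⟨⟨p1, p2⟩, ⟨q1, q2⟩⟩ h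
    simp only [Finset.mem_sigma, Finset.HasAntidiagonal.mem_antidiagonal] at h
    simp only [Sigma.mk.inj_iff, Prod.mk.injEq, heq_eq_eq, and_true, true_and]
    omega
  · rintro ⟨⟨p1, p2⟩, ⟨q1, q2⟩⟩ h
    simp only [Finset.mem_sigma, Finset.HasAntidiagonal.mem_antidiagonal] at h
    simp only [Sigma.mk.inj_iff, Prod.mk.injEq, heq_eq_eq, and_true, true_and]
    omega
  · rintro ⟨⟨p1, p2⟩, ⟨q1, q2⟩⟩ _
    rfl

lemma csh_succ_apply (x y : ℕ → D) (n : ℕ) :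
    csh k x y (n + 1) =
      ∑ p ∈ Finset.HasAntidiagonal.antidiagonal n, (hsPrec k (x p.1) (y p.2) + hsSucc k (x p.1) (y p.2)) := by
  show cprec k x y (n+1) + csucc k x y (n+1) = _
  rw [cprec_succ_apply, csucc_succ_apply, Finset.sum_add_distrib]

lemma csh_zero_apply (x y : ℕ → D) : csh k x y 0 = 0 := by
  show cprec k x y 0 + csucc k x y 0 = 0
  rw [cprec_zero_apply, csucc_zero_apply, add_zero]

lemma cprec_cprec (a b c : ℕ → D) :
    cprec k (cprec k a b) c = cprec k a (csh k b c) := by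
  funext n
  match n with
  | 0 => rfl
  | 1 =>
    rw [cprec_succ_apply, cprec_succ_apply]
    simp [cprec_zero_apply, csh_zero_apply, hsPrec_zero_right, hsPrec, hsSucc]
  | (n + 2) =>
    rw [cprec_succ_apply, cprec_succ_apply, Finset.Nat.sum_antidiagonal_succ,
      Finset.Nat.sum_antidiagonal_succ']
    simp only [cprec_zero_apply, csh_zero_apply, hsPrec_zero_left, hsPrec_zero_right, zero_add]
    have lhs : ∀ p : ℕ × ℕ, hsPrec k (cprec k a b (p.1 + 1)) (c p.2) =
        ∑ q ∈ Finset.HasAntidiagonal.antidiagonal p.1, hsPrec k (hsPrec k (a q.1) (b q.2)) (c p.2) := by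
      intro p
      rw [cprec_succ_apply]
      show (ShuffleAlgebra.prec (k := k) (∑ q ∈ Finset.HasAntidiagonal.antidiagonal p.1,
        hsPrec k (a q.1) (b q.2))) (c p.2) = _
      rw [map_sum, LinearMap.sum_apply]
      rfl
    have rhs : ∀ p : ℕ × ℕ, hsPrec k (a p.1) (csh k b c (p.2 + 1)) =
        ∑ q ∈ Finset.HasAntidiagonal.antidiagonal p.2,
          hsPrec k (a p.1) (hsPrec k (b q.1) (c q.2) + hsSucc k (b q.1) (c q.2)) := by
      intro p
      rw [csh_succ_apply]
      show (ShuffleAlgebra.prec (k := k) (a p.1)) _ = _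
      rw [map_sum]
      rfl
    rw [Finset.sum_congr rfl fun p _ => lhs p, Finset.sum_congr rfl fun p _ => rhs p,
      antidiag_assoc n (fun i j l => hsPrec k (hsPrec k (a i) (b j)) (c l))]
    refine Finset.sum_congr rfl fun p _ => Finset.sum_congr rfl fun q _ => ?_
    exact ShuffleAlgebra.prec_prec _ _ _

lemma csucc_cprec (a b c : ℕ → D) :
    cprec k (csucc k a b) c = csucc k a (cprec k b c) := by
  funext n
  match n with
  | 0 => rfl
  | 1 =>
    rw [cprec_succ_apply, csucc_succ_apply]
    simp [csucc_zero_apply, cprec_zero_apply, hsPrec, hsSucc]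
  | (n + 2) =>
    rw [cprec_succ_apply, csucc_succ_apply, Finset.Nat.sum_antidiagonal_succ,
      Finset.Nat.sum_antidiagonal_succ']
    simp only [csucc_zero_apply, cprec_zero_apply, hsPrec_zero_left, hsSucc_zero_right, zero_add]
    have lhs : ∀ p : ℕ × ℕ, hsPrec k (csucc k a b (p.1 + 1)) (c p.2) =
        ∑ q ∈ Finset.HasAntidiagonal.antidiagonal p.1, hsPrec k (hsSucc k (a q.1) (b q.2)) (c p.2) := by
      intro p
      rw [csucc_succ_apply]
      show (ShuffleAlgebra.prec (k := k) (∑ q ∈ Finset.HasAntidiagonal.antidiagonal p.1,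
        hsSucc k (a q.1) (b q.2))) (c p.2) = _
      rw [map_sum, LinearMap.sum_apply]
      rfl
    have rhs : ∀ p : ℕ × ℕ, hsSucc k (a p.1) (cprec k b c (p.2 + 1)) =
        ∑ q ∈ Finset.HasAntidiagonal.antidiagonal p.2, hsSucc k (a p.1) (hsPrec k (b q.1) (c q.2)) := by
      intro p
      rw [cprec_succ_apply]
      show (ShuffleAlgebra.succ (k := k) (a p.1)) _ = _
      rw [map_sum]
      rfl
    rw [Finset.sum_congr rfl fun p _ => lhs p, Finset.sum_congr rfl fun p _ => rhs p,
      antidiag_assoc n (fun i j l => hsPrec k (hsSucc k (a i) (b j)) (c l))]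
    refine Finset.sum_congr rfl fun p _ => Finset.sum_congr rfl fun q _ => ?_
    exact ShuffleAlgebra.succ_prec _ _ _

lemma csucc_csucc (a b c : ℕ → D) :
    csucc k (csh k a b) c = csucc k a (csucc k b c) := by
  funext n
  match n with
  | 0 => rfl
  | 1 =>
    rw [csucc_succ_apply, csucc_succ_apply]
    simp [csucc_zero_apply, csh_zero_apply, hsSucc]
  | (n + 2) =>
    rw [csucc_succ_apply, csucc_succ_apply, Finset.Nat.sum_antidiagonal_succ,
      Finset.Nat.sum_antidiagonal_succ']
    simp only [csh_zero_apply, csucc_zero_apply, hsSucc_zero_left, hsSucc_zero_right, zero_add]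
    have lhs : ∀ p : ℕ × ℕ, hsSucc k (csh k a b (p.1 + 1)) (c p.2) =
        ∑ q ∈ Finset.HasAntidiagonal.antidiagonal p.1,
          hsSucc k (hsPrec k (a q.1) (b q.2) + hsSucc k (a q.1) (b q.2)) (c p.2) := by
      intro p
      rw [csh_succ_apply]
      show (ShuffleAlgebra.succ (k := k) (∑ q ∈ Finset.HasAntidiagonal.antidiagonal p.1,
        (hsPrec k (a q.1) (b q.2) + hsSucc k (a q.1) (b q.2)))) (c p.2) = _
      rw [map_sum, LinearMap.sum_apply]
      rfl
    have rhs : ∀ p : ℕ × ℕ, hsSucc k (a p.1) (csucc k b c (p.2 + 1)) =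
        ∑ q ∈ Finset.HasAntidiagonal.antidiagonal p.2, hsSucc k (a p.1) (hsSucc k (b q.1) (c q.2)) := by
      intro p
      rw [csucc_succ_apply]
      show (ShuffleAlgebra.succ (k := k) (a p.1)) _ = _
      rw [map_sum]
      rfl
    rw [Finset.sum_congr rfl fun p _ => lhs p, Finset.sum_congr rfl fun p _ => rhs p,
      antidiag_assoc n (fun i j l => hsSucc k (hsPrec k (a i) (b j) + hsSucc k (a i) (b j)) (c l))]
    refine Finset.sum_congr rfl fun p _ => Finset.sum_congr rfl fun q _ => ?_
    exact (ShuffleAlgebra.succ_succ _ _ _).symm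

lemma precPow_eq_zero (x : ℕ → D) : ∀ m n : ℕ, n < m → precPow k x m n = 0 := by
  intro m
  induction m with
  | zero => intro n h; omega
  | succ m ih =>
    intro n h
    match n with
    | 0 => rfl
    | n + 1 =>
      show ∑ p ∈ Finset.HasAntidiagonal.antidiagonal n, hsPrec k (x p.1) (precPow k x m p.2) = 0
      refine Finset.sum_eq_zero fun p hp => ?_
      rw [Finset.HasAntidiagonal.mem_antidiagonal] at hp
      rw [ih p.2 (by omega), hsPrec_zero_right]

lemma succPow_eq_zero (x : ℕ → D) : ∀ m n : ℕ, n < m → succPow k x m n = 0 := by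
  intro m
  induction m with
  | zero => intro n h; omega
  | succ m ih =>
    intro n h
    match n with
    | 0 => rfl
    | n + 1 =>
      show ∑ p ∈ Finset.HasAntidiagonal.antidiagonal n, hsSucc k (succPow k x m p.1) (x p.2) = 0
      refine Finset.sum_eq_zero fun p hp => ?_
      rw [Finset.HasAntidiagonal.mem_antidiagonal] at hp
      rw [ih p.1 (by omega), hsSucc_zero_left]

/-- `X := Σ_{n>0} x^{≺n}` (positive-degree part of `exp^≺(x)`). -/
def Xs (x : ℕ → D) : ℕ → D := fun n => ∑ m ∈ Finset.range (n + 1), precPow k x m n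

/-- `Y := Σ_{n>0} (−x)^{≻n}` (positive-degree part of `exp^≻(−x)`). -/
def Ys (x : ℕ → D) : ℕ → D := fun n => ∑ m ∈ Finset.range (n + 1), succPow k (-x) m n

lemma Xs_eq (x : ℕ → D) : Xs k x = x + cprec k x (Xs k x) := by
  funext n
  cases n with
  | zero =>
    show ∑ m ∈ Finset.range 1, precPow k x m 0 = x 0 + cprec k x (Xs k x) 0
    rw [cprec_zero_apply, add_zero, Finset.sum_range_one]
    rfl
  | succ n =>
    show ∑ m ∈ Finset.range (n + 2), precPow k x m (n + 1)
        = x (n + 1) + cprec k x (Xs k x) (n + 1)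
    rw [Finset.sum_range_succ', cprec_succ_apply]
    have step : ∀ p ∈ Finset.HasAntidiagonal.antidiagonal n, hsPrec k (x p.1) (Xs k x p.2) =
        ∑ m ∈ Finset.range (n + 1), hsPrec k (x p.1) (precPow k x m p.2) := by
      intro p hp
      rw [Finset.HasAntidiagonal.mem_antidiagonal] at hp
      have hext : Xs k x p.2 = ∑ m ∈ Finset.range (n + 1), precPow k x m p.2 := by
        refine Finset.sum_subset ?_ ?_
        · intro m hm
          rw [Finset.mem_range] at hm ⊢
          omega
        · intro m _ hm
          rw [Finset.mem_range] at hm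
          exact precPow_eq_zero k x m p.2 (by omega)
      rw [hext]
      show (ShuffleAlgebra.prec (k := k) (x p.1)) _ = _
      rw [map_sum]
      rfl
    rw [Finset.sum_congr rfl step, Finset.sum_comm]
    have step2 : ∀ m ∈ Finset.range (n + 1),
        ∑ p ∈ Finset.HasAntidiagonal.antidiagonal n, hsPrec k (x p.1) (precPow k x m p.2)
          = precPow k x (m + 1) (n + 1) := fun m _ => rfl
    rw [Finset.sum_congr rfl step2]
    have : precPow k x 0 (n + 1) = x (n + 1) := rfl
    rw [this, add_comm]

lemma Ys_eq (x : ℕ → D) : Ys k x = (-x) + csucc k (Ys k x) (-x) := by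
  funext n
  cases n with
  | zero =>
    show ∑ m ∈ Finset.range 1, succPow k (-x) m 0 = (-x) 0 + csucc k (Ys k x) (-x) 0
    rw [csucc_zero_apply, add_zero, Finset.sum_range_one]
    rfl
  | succ n =>
    show ∑ m ∈ Finset.range (n + 2), succPow k (-x) m (n + 1)
        = (-x) (n + 1) + csucc k (Ys k x) (-x) (n + 1)
    rw [Finset.sum_range_succ', csucc_succ_apply]
    have step : ∀ p ∈ Finset.HasAntidiagonal.antidiagonal n, hsSucc k (Ys k x p.1) ((-x) p.2) =
        ∑ m ∈ Finset.range (n + 1), hsSucc k (succPow k (-x) m p.1) ((-x) p.2) := by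
      intro p hp
      rw [Finset.HasAntidiagonal.mem_antidiagonal] at hp
      have hext : Ys k x p.1 = ∑ m ∈ Finset.range (n + 1), succPow k (-x) m p.1 := by
        refine Finset.sum_subset ?_ ?_
        · intro m hm
          rw [Finset.mem_range] at hm ⊢
          omega
        · intro m _ hm
          rw [Finset.mem_range] at hm
          exact succPow_eq_zero k (-x) m p.1 (by omega)
      rw [hext]
      show (ShuffleAlgebra.succ (k := k) (∑ m ∈ Finset.range (n + 1),
        succPow k (-x) m p.1)) ((-x) p.2) = _
      rw [map_sum, LinearMap.sum_apply]
      rfl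
    rw [Finset.sum_congr rfl step, Finset.sum_comm]
    have step2 : ∀ m ∈ Finset.range (n + 1),
        ∑ p ∈ Finset.HasAntidiagonal.antidiagonal n, hsSucc k (succPow k (-x) m p.1) ((-x) p.2)
          = succPow k (-x) (m + 1) (n + 1) := fun m _ => rfl
    rw [Finset.sum_congr rfl step2]
    have : succPow k (-x) 0 (n + 1) = (-x) (n + 1) := rfl
    rw [this, add_comm]

lemma hprecX (x : ℕ → D) : cprec k x (Xs k x) = Xs k x - x := by
  conv_rhs => rw [Xs_eq k x]
  abel

lemma hsuccY (x : ℕ → D) : csucc k (Ys k x) x = -x - Ys k x := by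
  conv_rhs => rw [Ys_eq k x]
  rw [csucc_neg_right]
  abel

/-- Key identity: `Y ⧢ X = -(X + Y)` on the positive-degree parts. -/
lemma shuffle_YX (x : ℕ → D) :
    Xs k x + Ys k x + csh k (Ys k x) (Xs k x) = 0 := by
  have hX : cprec k x (Xs k x) = Xs k x - x := hprecX k x
  have hY : csucc k (Ys k x) x = -x - Ys k x := hsuccY k x
  have key : cprec k (Ys k x) (Xs k x) =
      -(cprec k x (Xs k x)) - csucc k (Ys k x) (cprec k x (Xs k x)) := by
    conv_lhs => rw [Ys_eq k x]
    rw [cprec_add_left, cprec_neg_left, csucc_cprec, cprec_neg_left, csucc_neg_right]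
    abel
  rw [hX, csucc_sub_right, hY] at key
  show Xs k x + Ys k x
      + (cprec k (Ys k x) (Xs k x) + csucc k (Ys k x) (Xs k x)) = 0
  rw [key]
  abel

/-- Key identity: `X ⧢ Y = -(X + Y)` on the positive-degree parts. -/
lemma shuffle_XY (x : ℕ → D) :
    Xs k x + Ys k x + csh k (Xs k x) (Ys k x) = 0 := by
  have hX : cprec k x (Xs k x) = Xs k x - x := hprecX k x
  have hY : csucc k (Ys k x) x = -x - Ys k x := hsuccY k x
  have h1 : cprec k (Xs k x) (Ys k x) =
      cprec k x (Ys k x) + cprec k x (csh k (Xs k x) (Ys k x)) := by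
    conv_lhs => rw [Xs_eq k x]
    rw [cprec_add_left, cprec_cprec]
  have h2 : csucc k (Xs k x) (Ys k x) =
      -(csucc k (Xs k x) x) - csucc k (csh k (Xs k x) (Ys k x)) x := by
    conv_lhs => rw [Ys_eq k x]
    rw [csucc_add_right, csucc_neg_right, ← csucc_csucc, csucc_neg_right]
    abel
  have hWrec : Xs k x + Ys k x + csh k (Xs k x) (Ys k x) =
      cprec k x (Xs k x + Ys k x + csh k (Xs k x) (Ys k x))
        - csucc k (Xs k x + Ys k x + csh k (Xs k x) (Ys k x)) x := by
    rw [cprec_add_right, cprec_add_right, csucc_add_left, csucc_add_left, hX, hY]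
    conv_lhs => rw [show csh k (Xs k x) (Ys k x)
      = cprec k (Xs k x) (Ys k x) + csucc k (Xs k x) (Ys k x) from rfl, h1, h2]
    abel
  have hzero : ∀ n, (Xs k x + Ys k x + csh k (Xs k x) (Ys k x)) n = 0 := by
    intro n
    induction n using Nat.strong_induction_on with
    | _ n ih =>
      match n with
      | 0 =>
        show Xs k x 0 + Ys k x 0 + csh k (Xs k x) (Ys k x) 0 = 0
        rw [csh_zero_apply]
        have hX0 : Xs k x 0 = x 0 := by
          show ∑ m ∈ Finset.range 1, precPow k x m 0 = x 0
          rw [Finset.sum_range_one]; rfl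
        have hY0 : Ys k x 0 = -(x 0) := by
          show ∑ m ∈ Finset.range 1, succPow k (-x) m 0 = -(x 0)
          rw [Finset.sum_range_one]; rfl
        rw [hX0, hY0]
        abel
      | n + 1 =>
        have expand : (Xs k x + Ys k x + csh k (Xs k x) (Ys k x)) (n + 1) =
            ∑ p ∈ Finset.HasAntidiagonal.antidiagonal n,
              hsPrec k (x p.1) ((Xs k x + Ys k x + csh k (Xs k x) (Ys k x)) p.2)
            - ∑ p ∈ Finset.HasAntidiagonal.antidiagonal n,
              hsSucc k ((Xs k x + Ys k x + csh k (Xs k x) (Ys k x)) p.1) (x p.2) := by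
          conv_lhs => rw [hWrec]
          show cprec k x (Xs k x + Ys k x + csh k (Xs k x) (Ys k x)) (n + 1)
            - csucc k (Xs k x + Ys k x + csh k (Xs k x) (Ys k x)) x (n + 1) = _
          rw [cprec_succ_apply, csucc_succ_apply]
        rw [expand]
        have e1 : ∑ p ∈ Finset.HasAntidiagonal.antidiagonal n,
            hsPrec k (x p.1) ((Xs k x + Ys k x + csh k (Xs k x) (Ys k x)) p.2) = 0 := by
          refine Finset.sum_eq_zero fun p hp => ?_
          rw [Finset.HasAntidiagonal.mem_antidiagonal] at hp
          rw [ih p.2 (by omega), hsPrec_zero_right]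
        have e2 : ∑ p ∈ Finset.HasAntidiagonal.antidiagonal n,
            hsSucc k ((Xs k x + Ys k x + csh k (Xs k x) (Ys k x)) p.1) (x p.2) = 0 := by
          refine Finset.sum_eq_zero fun p hp => ?_
          rw [Finset.HasAntidiagonal.mem_antidiagonal] at hp
          rw [ih p.1 (by omega), hsSucc_zero_left]
        rw [e1, e2, sub_zero]
  funext n
  exact hzero n

end Aux


/-- in a graded connected unital shuffle algebra, for `x` of positive
degree, `Y := exp^≻(−x)` and `X := exp^≺(x)` satisfy `Y ⧢ X = X ⧢ Y = 1`;
in particular `Y` is the shuffle-inverse of `X`. -/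

theorem expSucc_neg_shuffle_inverse_expPrec (x : ℕ → D) :
    ush k (expSucc k (-x)) (expPrec k x) = uone k ∧
      ush k (expPrec k x) (expSucc k (-x)) = uone k := by
  have hXdef : (expPrec k x).2 = Xs k x := rfl
  have hYdef : (expSucc k (-x)).2 = Ys k x := rfl
  constructor
  · show ((1 : k) * 1, (1 : k) • (expPrec k x).2 + (1 : k) • (expSucc k (-x)).2
      + csh k (expSucc k (-x)).2 (expPrec k x).2) = ((1 : k), 0)
    rw [one_mul, one_smul, one_smul, hXdef, hYdef]
    exact Prod.ext rfl (shuffle_YX k x)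
  · show ((1 : k) * 1, (1 : k) • (expSucc k (-x)).2 + (1 : k) • (expPrec k x).2
      + csh k (expPrec k x).2 (expSucc k (-x)).2) = ((1 : k), 0)
    rw [one_mul, one_smul, one_smul, hXdef, hYdef]
    refine Prod.ext rfl ?_
    have := shuffle_XY k x
    rw [show Ys k x + Xs k x + csh k (Xs k x) (Ys k x)
      = Xs k x + Ys k x + csh k (Xs k x) (Ys k x) by abel]
    exact this
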